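/- Let obs(K+1) ⊆ {1,…,d} be any index set (possibly a pattern unseen during training) such that Π_{lj} > 0 for all l, j ∈ obs(K+1), and assume Σ_{obs(K+1)} is invertible. Then the component-wise plug-in estimator θ̂^{(K+1)}_{PI} := (Σ̂^{cw}_{obs(K+1)})^{-1} γ̂^{cw}_{obs(K+1)} converges almost surely, as n → ∞, to the oracle local coefficient θ^{(K+1)}_* := Σ_{obs(K+1)}^{-1} γ_{obs(K+1)}. -/

import Mathlib

open MeasureTheory ProbabilityTheory Matrix Filter Topology

private lemma integrable_mul_of_memL2 {Ω : Type*} [MeasurableSpace Ω] {μ : Measure Ω}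
    {f g : Ω → ℝ} (hf : MemLp f 2 μ) (hg : MemLp g 2 μ) :
    Integrable (fun ω => f ω * g ω) μ := by
  have h : Integrable (fun ω => (((f ω + g ω) ^ 2 - f ω ^ 2) - g ω ^ 2) / 2) μ :=
    (((hf.add hg).integrable_sq.sub hf.integrable_sq).sub hg.integrable_sq).div_const 2
  refine h.congr (Filter.Eventually.of_forall fun ω => ?_)
  ring

private lemma slln_comp {Ω α : Type*} [MeasurableSpace Ω] [MeasurableSpace α]
    {μ : Measure Ω} (T : ℕ → Ω → α) (hT : ∀ i, Measurable (T i))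
    (hindep : iIndepFun T μ)
    (hident : ∀ i, μ.map (T i) = μ.map (T 0))
    (g : α → ℝ) (hg : Measurable g)
    (hint : Integrable (fun ω => g (T 0 ω)) μ) :
    ∀ᵐ ω ∂μ, Tendsto (fun n : ℕ => (1 / (n : ℝ)) * ∑ i ∈ Finset.range n, g (T i ω))
      atTop (𝓝 (∫ ω, g (T 0 ω) ∂μ)) := by
  have h := strong_law_ae (μ := μ) (fun i ω => g (T i ω)) hint
    (fun i j hij => ((hindep.indepFun hij).comp hg hg))
    (fun i => IdentDistrib.comp ⟨(hT i).aemeasurable, (hT 0).aemeasurable, hident i⟩ hg)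
  simpa [smul_eq_mul, one_div] using h

/-- almost sure convergence of the component-wise plug-in estimator
to the oracle local coefficient for a (possibly unseen) pattern `obs(K+1)`,
provided every pair of its features is co-observed with positive probability. -/
theorem stmt5
    {Ω : Type*} [MeasurableSpace Ω] (μ : Measure Ω) [IsProbabilityMeasure μ]
    {d K : ℕ}
    (obs : Fin K → Finset (Fin d))
    (H : ℕ → Ω → Fin K) (X : ℕ → Ω → Fin d → ℝ) (Y : ℕ → Ω → ℝ)
    (hHmeas : ∀ i, Measurable (H i))
    (hXmeas : ∀ i j, Measurable fun ω => X i ω j)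
    (hYmeas : ∀ i, Measurable (Y i))
    (hX2 : ∀ i j, MemLp (fun ω => X i ω j) 2 μ) (hY2 : ∀ i, MemLp (Y i) 2 μ)
    -- i.i.d. samples
    (hiid : iIndepFun
      (fun i ω => (H i ω, X i ω, Y i ω)) μ)
    (hident : ∀ i, μ.map (fun ω => (H i ω, X i ω, Y i ω))
      = μ.map (fun ω => (H 0 ω, X 0 ω, Y 0 ω)))
    -- MCAR: client index independent of the data
    (hMCAR : ∀ i, IndepFun (H i) (fun ω => (X i ω, Y i ω)) μ)
    -- observation masks
    (M : ℕ → Ω → Fin d → ℝ)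
    (hM : ∀ i ω j, M i ω j = if j ∈ obs (H i ω) then (1 : ℝ) else 0)
    -- population moments and co-observation matrix
    (Sig : Matrix (Fin d) (Fin d) ℝ)
    (hSig : ∀ l j, Sig l j = ∫ ω, X 0 ω l * X 0 ω j ∂μ)
    (gam : Fin d → ℝ) (hgam : ∀ j, gam j = ∫ ω, X 0 ω j * Y 0 ω ∂μ)
    (Pi : Matrix (Fin d) (Fin d) ℝ)
    (hPi : ∀ l j, Pi l j = ∫ ω, M 0 ω l * M 0 ω j ∂μ)
    -- the new client's observation pattern
    (obsNew : Finset (Fin d))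
    (hsupport : ∀ l ∈ obsNew, ∀ j ∈ obsNew, 0 < Pi l j)
    (hSobsInv : IsUnit (Sig.submatrix (Subtype.val : ↥obsNew → Fin d)
      (Subtype.val : ↥obsNew → Fin d)).det)
    -- empirical component-wise estimators from the first n samples
    (Pihat : ℕ → Ω → Matrix (Fin d) (Fin d) ℝ)
    (hPihat : ∀ n ω l j, Pihat n ω l j
      = (1 / (n : ℝ)) * ∑ i ∈ Finset.range n, M i ω l * M i ω j)
    (Sigcw : ℕ → Ω → Matrix (Fin d) (Fin d) ℝ)
    (hSigcw : ∀ n ω l j, Sigcw n ω l j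
      = ((1 / (n : ℝ)) * ∑ i ∈ Finset.range n,
          (M i ω l * X i ω l) * (M i ω j * X i ω j)) / Pihat n ω l j)
    (gamcw : ℕ → Ω → Fin d → ℝ)
    (hgamcw : ∀ n ω j, gamcw n ω j
      = ((1 / (n : ℝ)) * ∑ i ∈ Finset.range n,
          (M i ω j * X i ω j) * Y i ω) / Pihat n ω j j)
    -- the plug-in estimator and the oracle coefficient for the new client
    (θhat : ℕ → Ω → ↥obsNew → ℝ)
    (hθhat : ∀ n ω, θhat n ω
      = ((Sigcw n ω).submatrix (Subtype.val : ↥obsNew → Fin d)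
          (Subtype.val : ↥obsNew → Fin d))⁻¹ *ᵥ (fun j : ↥obsNew => gamcw n ω j))
    (θoracle : ↥obsNew → ℝ)
    (hθoracle : θoracle = (Sig.submatrix (Subtype.val : ↥obsNew → Fin d)
      (Subtype.val : ↥obsNew → Fin d))⁻¹ *ᵥ (fun j : ↥obsNew => gam j)) :
    ∀ᵐ ω ∂μ, Tendsto (fun n => θhat n ω) atTop (nhds θoracle) := by
  classical
  set T : ℕ → Ω → (Fin K × (Fin d → ℝ) × ℝ) := fun i ω => (H i ω, X i ω, Y i ω) with hTdef
  have hTmeas : ∀ i, Measurable (T i) := fun i =>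
    (hHmeas i).prodMk ((measurable_pi_iff.2 (hXmeas i)).prodMk (hYmeas i))
  have key : ∀ (g : (Fin K × (Fin d → ℝ) × ℝ) → ℝ), Measurable g →
      Integrable (fun ω => g (T 0 ω)) μ →
      ∀ᵐ ω ∂μ, Tendsto (fun n : ℕ => (1 / (n : ℝ)) * ∑ i ∈ Finset.range n, g (T i ω))
        atTop (𝓝 (∫ ω, g (T 0 ω) ∂μ)) :=
    fun g hg hint => slln_comp T hTmeas hiid hident g hg hint
  -- indicator measurability
  have hindm : ∀ j : Fin d, Measurable (fun h : Fin K => if j ∈ obs h then (1:ℝ) else 0) :=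
    fun j => measurable_of_countable _
  have hindbdd : ∀ (j : Fin d) (h : Fin K), ‖if j ∈ obs h then (1:ℝ) else 0‖ ≤ 1 := by
    intro j h; split_ifs <;> simp
  have hMT : ∀ i ω j, M i ω j = (if j ∈ obs ((T i ω).1) then (1:ℝ) else 0) :=
    fun i ω j => hM i ω j
  -- Part A: Pihat entries
  have hA : ∀ l j : Fin d, ∀ᵐ ω ∂μ, Tendsto
      (fun n : ℕ => (1 / (n : ℝ)) * ∑ i ∈ Finset.range n, M i ω l * M i ω j)
      atTop (𝓝 (Pi l j)) := by
    intro l j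
    set g : (Fin K × (Fin d → ℝ) × ℝ) → ℝ := fun a =>
      (if l ∈ obs a.1 then (1:ℝ) else 0) * (if j ∈ obs a.1 then (1:ℝ) else 0) with hg
    have hgm : Measurable g := ((hindm l).comp measurable_fst).mul ((hindm j).comp measurable_fst)
    have hgint : Integrable (fun ω => g (T 0 ω)) μ := by
      refine (integrable_const (1:ℝ)).mono' (hgm.comp (hTmeas 0)).aestronglyMeasurable ?_
      refine Filter.Eventually.of_forall fun ω => ?_
      simp only [hg, norm_mul]
      exact le_trans (mul_le_mul (hindbdd l _) (hindbdd j _) (norm_nonneg _) zero_le_one)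
        (by norm_num)
    have h := key g hgm hgint
    have hInt : ∫ ω, g (T 0 ω) ∂μ = Pi l j := by
      rw [hPi l j]
      refine integral_congr_ae (Filter.Eventually.of_forall fun ω => ?_)
      simp only [hMT, hg]
    rw [hInt] at h
    have heq : ∀ ω, (fun n : ℕ => (1 / (n : ℝ)) * ∑ i ∈ Finset.range n, g (T i ω))
        = fun n : ℕ => (1 / (n : ℝ)) * ∑ i ∈ Finset.range n, M i ω l * M i ω j := by
      intro ω; funext n; congr 1
      refine Finset.sum_congr rfl fun i _ => ?_
      simp only [hMT, hg]
    filter_upwards [h] with ω hω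
    rw [← heq ω]; exact hω
  -- Part B: zero-imputed second moments
  have hB : ∀ l j : Fin d, ∀ᵐ ω ∂μ, Tendsto
      (fun n : ℕ => (1 / (n : ℝ)) * ∑ i ∈ Finset.range n,
        (M i ω l * X i ω l) * (M i ω j * X i ω j))
      atTop (𝓝 (Pi l j * Sig l j)) := by
    intro l j
    set g : (Fin K × (Fin d → ℝ) × ℝ) → ℝ := fun a =>
      ((if l ∈ obs a.1 then (1:ℝ) else 0) * a.2.1 l) *
      ((if j ∈ obs a.1 then (1:ℝ) else 0) * a.2.1 j) with hg
    have hgm : Measurable g :=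
      (((hindm l).comp measurable_fst).mul
        ((measurable_pi_apply l).comp (measurable_fst.comp measurable_snd))).mul
      (((hindm j).comp measurable_fst).mul
        ((measurable_pi_apply j).comp (measurable_fst.comp measurable_snd)))
    have hXX : Integrable (fun ω => X 0 ω l * X 0 ω j) μ :=
      integrable_mul_of_memL2 (hX2 0 l) (hX2 0 j)
    have hindmeas : AEStronglyMeasurable
        (fun ω => (if l ∈ obs (H 0 ω) then (1:ℝ) else 0) *
          (if j ∈ obs (H 0 ω) then (1:ℝ) else 0)) μ :=
      (((hindm l).comp (hHmeas 0)).mul ((hindm j).comp (hHmeas 0))).aestronglyMeasurable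
    have hbd : Integrable (fun ω =>
        ((if l ∈ obs (H 0 ω) then (1:ℝ) else 0) * (if j ∈ obs (H 0 ω) then (1:ℝ) else 0)) *
        (X 0 ω l * X 0 ω j)) μ := by
      refine hXX.bdd_mul (c := 1) hindmeas (Filter.Eventually.of_forall fun ω => ?_)
      rw [norm_mul]
      exact le_trans (mul_le_mul (hindbdd l _) (hindbdd j _) (norm_nonneg _) zero_le_one)
        (by norm_num)
    have hgint : Integrable (fun ω => g (T 0 ω)) μ := by
      refine hbd.congr (Filter.Eventually.of_forall fun ω => ?_)
      simp only [hg, hTdef]; ring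
    have hIndInt : Integrable (fun ω =>
        (if l ∈ obs (H 0 ω) then (1:ℝ) else 0) * (if j ∈ obs (H 0 ω) then (1:ℝ) else 0)) μ := by
      refine (integrable_const (1:ℝ)).mono' hindmeas ?_
      refine Filter.Eventually.of_forall fun ω => ?_
      rw [norm_mul]
      exact le_trans (mul_le_mul (hindbdd l _) (hindbdd j _) (norm_nonneg _) zero_le_one)
        (by norm_num)
    have hindep2 : IndepFun
        (fun ω => (if l ∈ obs (H 0 ω) then (1:ℝ) else 0) * (if j ∈ obs (H 0 ω) then (1:ℝ) else 0))
        (fun ω => X 0 ω l * X 0 ω j) μ :=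
      (hMCAR 0).comp
        (φ := fun h : Fin K => (if l ∈ obs h then (1:ℝ) else 0) * (if j ∈ obs h then (1:ℝ) else 0))
        (ψ := fun p : (Fin d → ℝ) × ℝ => p.1 l * p.1 j)
        ((hindm l).mul (hindm j))
        (((measurable_pi_apply l).comp measurable_fst).mul
          ((measurable_pi_apply j).comp measurable_fst))
    have hmul : (∫ ω, ((if l ∈ obs (H 0 ω) then (1:ℝ) else 0) *
          (if j ∈ obs (H 0 ω) then (1:ℝ) else 0)) * (X 0 ω l * X 0 ω j) ∂μ)
        = (∫ ω, (if l ∈ obs (H 0 ω) then (1:ℝ) else 0) *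
            (if j ∈ obs (H 0 ω) then (1:ℝ) else 0) ∂μ) * ∫ ω, X 0 ω l * X 0 ω j ∂μ :=
      hindep2.integral_fun_mul_eq_mul_integral hIndInt.aestronglyMeasurable hXX.aestronglyMeasurable
    have hInt : ∫ ω, g (T 0 ω) ∂μ = Pi l j * Sig l j := by
      rw [hPi l j, hSig l j]
      calc ∫ ω, g (T 0 ω) ∂μ
          = ∫ ω, ((if l ∈ obs (H 0 ω) then (1:ℝ) else 0) *
              (if j ∈ obs (H 0 ω) then (1:ℝ) else 0)) * (X 0 ω l * X 0 ω j) ∂μ := by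
            refine integral_congr_ae (Filter.Eventually.of_forall fun ω => ?_)
            simp only [hg, hTdef]; ring
        _ = (∫ ω, (if l ∈ obs (H 0 ω) then (1:ℝ) else 0) *
              (if j ∈ obs (H 0 ω) then (1:ℝ) else 0) ∂μ) * ∫ ω, X 0 ω l * X 0 ω j ∂μ := hmul
        _ = (∫ ω, M 0 ω l * M 0 ω j ∂μ) * ∫ ω, X 0 ω l * X 0 ω j ∂μ := by
            congr 1
            refine integral_congr_ae (Filter.Eventually.of_forall fun ω => ?_)
            simp only [hM]
    have h := key g hgm hgint
    rw [hInt] at h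
    have heq : ∀ ω, (fun n : ℕ => (1 / (n : ℝ)) * ∑ i ∈ Finset.range n, g (T i ω))
        = fun n : ℕ => (1 / (n : ℝ)) * ∑ i ∈ Finset.range n,
            (M i ω l * X i ω l) * (M i ω j * X i ω j) := by
      intro ω; funext n; congr 1
      refine Finset.sum_congr rfl fun i _ => ?_
      simp only [hg, hTdef, hM]
    filter_upwards [h] with ω hω
    rw [← heq ω]; exact hω
  -- Part C: zero-imputed cross moments
  have hC : ∀ j : Fin d, ∀ᵐ ω ∂μ, Tendsto
      (fun n : ℕ => (1 / (n : ℝ)) * ∑ i ∈ Finset.range n, (M i ω j * X i ω j) * Y i ω)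
      atTop (𝓝 (Pi j j * gam j)) := by
    intro j
    set g : (Fin K × (Fin d → ℝ) × ℝ) → ℝ := fun a =>
      ((if j ∈ obs a.1 then (1:ℝ) else 0) * a.2.1 j) * a.2.2 with hg
    have hgm : Measurable g :=
      (((hindm j).comp measurable_fst).mul
        ((measurable_pi_apply j).comp (measurable_fst.comp measurable_snd))).mul
      (measurable_snd.comp measurable_snd)
    have hXY : Integrable (fun ω => X 0 ω j * Y 0 ω) μ :=
      integrable_mul_of_memL2 (hX2 0 j) (hY2 0)
    have hindmeas : AEStronglyMeasurable
        (fun ω => (if j ∈ obs (H 0 ω) then (1:ℝ) else 0)) μ :=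
      ((hindm j).comp (hHmeas 0)).aestronglyMeasurable
    have hbd : Integrable (fun ω =>
        (if j ∈ obs (H 0 ω) then (1:ℝ) else 0) * (X 0 ω j * Y 0 ω)) μ :=
      hXY.bdd_mul (c := 1) hindmeas (Filter.Eventually.of_forall fun ω => hindbdd j _)
    have hgint : Integrable (fun ω => g (T 0 ω)) μ := by
      refine hbd.congr (Filter.Eventually.of_forall fun ω => ?_)
      simp only [hg, hTdef]; ring
    have hIndInt : Integrable (fun ω => (if j ∈ obs (H 0 ω) then (1:ℝ) else 0)) μ :=
      (integrable_const (1:ℝ)).mono' hindmeas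
        (Filter.Eventually.of_forall fun ω => hindbdd j _)
    have hindep2 : IndepFun (fun ω => (if j ∈ obs (H 0 ω) then (1:ℝ) else 0))
        (fun ω => X 0 ω j * Y 0 ω) μ :=
      (hMCAR 0).comp
        (φ := fun h : Fin K => (if j ∈ obs h then (1:ℝ) else 0))
        (ψ := fun p : (Fin d → ℝ) × ℝ => p.1 j * p.2)
        (hindm j)
        (((measurable_pi_apply j).comp measurable_fst).mul measurable_snd)
    have hmul : (∫ ω, (if j ∈ obs (H 0 ω) then (1:ℝ) else 0) * (X 0 ω j * Y 0 ω) ∂μ)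
        = (∫ ω, (if j ∈ obs (H 0 ω) then (1:ℝ) else 0) ∂μ) * ∫ ω, X 0 ω j * Y 0 ω ∂μ :=
      hindep2.integral_fun_mul_eq_mul_integral hIndInt.aestronglyMeasurable hXY.aestronglyMeasurable
    have hPid : Pi j j = ∫ ω, (if j ∈ obs (H 0 ω) then (1:ℝ) else 0) ∂μ := by
      rw [hPi j j]
      refine integral_congr_ae (Filter.Eventually.of_forall fun ω => ?_)
      simp only [hM]; split_ifs <;> norm_num
    have hInt : ∫ ω, g (T 0 ω) ∂μ = Pi j j * gam j := by
      rw [hPid, hgam j]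
      calc ∫ ω, g (T 0 ω) ∂μ
          = ∫ ω, (if j ∈ obs (H 0 ω) then (1:ℝ) else 0) * (X 0 ω j * Y 0 ω) ∂μ := by
            refine integral_congr_ae (Filter.Eventually.of_forall fun ω => ?_)
            simp only [hg, hTdef]; ring
        _ = (∫ ω, (if j ∈ obs (H 0 ω) then (1:ℝ) else 0) ∂μ) * ∫ ω, X 0 ω j * Y 0 ω ∂μ := hmul
    have h := key g hgm hgint
    rw [hInt] at h
    have heq : ∀ ω, (fun n : ℕ => (1 / (n : ℝ)) * ∑ i ∈ Finset.range n, g (T i ω))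
        = fun n : ℕ => (1 / (n : ℝ)) * ∑ i ∈ Finset.range n, (M i ω j * X i ω j) * Y i ω := by
      intro ω; funext n; congr 1
      refine Finset.sum_congr rfl fun i _ => ?_
      simp only [hg, hTdef, hM]
    filter_upwards [h] with ω hω
    rw [← heq ω]; exact hω
  -- combine and conclude deterministically
  have hAall := MeasureTheory.ae_all_iff.2 fun l : Fin d => MeasureTheory.ae_all_iff.2 (hA l)
  have hBall := MeasureTheory.ae_all_iff.2 fun l : Fin d => MeasureTheory.ae_all_iff.2 (hB l)
  have hCall := MeasureTheory.ae_all_iff.2 hC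
  filter_upwards [hAall, hBall, hCall] with ω HA HB HC
  have hP' : ∀ l j : Fin d, Tendsto (fun n : ℕ => Pihat n ω l j) atTop (𝓝 (Pi l j)) := by
    intro l j; simpa only [hPihat] using HA l j
  have hS' : ∀ l ∈ obsNew, ∀ j ∈ obsNew,
      Tendsto (fun n : ℕ => Sigcw n ω l j) atTop (𝓝 (Sig l j)) := by
    intro l hl j hj
    have hne : Pi l j ≠ 0 := ne_of_gt (hsupport l hl j hj)
    have h1 := (HB l j).div (hP' l j) hne
    rw [mul_comm, mul_div_assoc, div_self hne, mul_one] at h1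
    simpa only [hSigcw, _root_.Pi.div_def] using h1
  have hG' : ∀ j ∈ obsNew, Tendsto (fun n : ℕ => gamcw n ω j) atTop (𝓝 (gam j)) := by
    intro j hj
    have hne : Pi j j ≠ 0 := ne_of_gt (hsupport j hj j hj)
    have h1 := (HC j).div (hP' j j) hne
    rw [mul_comm, mul_div_assoc, div_self hne, mul_one] at h1
    simpa only [hgamcw, _root_.Pi.div_def] using h1
  have hmat : Tendsto (fun n : ℕ => (Sigcw n ω).submatrix
      (Subtype.val : ↥obsNew → Fin d) (Subtype.val : ↥obsNew → Fin d)) atTop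
      (𝓝 (Sig.submatrix (Subtype.val : ↥obsNew → Fin d) (Subtype.val : ↥obsNew → Fin d))) := by
    refine tendsto_pi_nhds.2 fun a => ?_
    refine tendsto_pi_nhds.2 fun b => ?_
    simp only [Matrix.submatrix_apply]
    exact hS' a a.2 b b.2
  have hcontinv : ContinuousAt Inv.inv (Sig.submatrix
      (Subtype.val : ↥obsNew → Fin d) (Subtype.val : ↥obsNew → Fin d)) := by
    refine continuousAt_matrix_inv _ ?_
    have := NormedRing.inverse_continuousAt hSobsInv.unit
    rwa [hSobsInv.unit_spec] at this
  have hinv2 : Tendsto (fun n : ℕ => ((Sigcw n ω).submatrix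
      (Subtype.val : ↥obsNew → Fin d) (Subtype.val : ↥obsNew → Fin d))⁻¹) atTop
      (𝓝 ((Sig.submatrix (Subtype.val : ↥obsNew → Fin d)
        (Subtype.val : ↥obsNew → Fin d))⁻¹)) :=
    hcontinv.tendsto.comp hmat
  have hvec : Tendsto (fun n : ℕ => (fun j : ↥obsNew => gamcw n ω j)) atTop
      (𝓝 (fun j : ↥obsNew => gam j)) := by
    rw [tendsto_pi_nhds]; intro j
    exact hG' j j.2
  have hcont : Continuous (fun p : Matrix ↥obsNew ↥obsNew ℝ × (↥obsNew → ℝ) =>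
      p.1 *ᵥ p.2) := continuous_fst.matrix_mulVec continuous_snd
  have final := (hcont.tendsto _).comp (hinv2.prodMk_nhds hvec)
  have : Tendsto (fun n : ℕ => ((Sigcw n ω).submatrix
      (Subtype.val : ↥obsNew → Fin d) (Subtype.val : ↥obsNew → Fin d))⁻¹ *ᵥ
      (fun j : ↥obsNew => gamcw n ω j)) atTop
      (𝓝 ((Sig.submatrix (Subtype.val : ↥obsNew → Fin d)
        (Subtype.val : ↥obsNew → Fin d))⁻¹ *ᵥ (fun j : ↥obsNew => gam j))) := final
  simp only [hθhat, hθoracle]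
  exact this
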